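/- Let A be an n×n real symmetric matrix with rank(A) ≥ n−1, and let B = [[A, α],[αᵀ, b]] be an (n+1)×(n+1) real symmetric matrix (α ∈ ℝⁿ, b ∈ ℝ) such that det(A) and det(B) are not both zero. If det(A)·det(B) > 0 then the negative index of inertia satisfies q(B) = q(A). -/

import Mathlib

open Matrix

/-- The negative index of inertia of a real symmetric matrix: the number of
negative eigenvalues counted with multiplicity. -/
noncomputable def negInertia {n : ℕ} (M : Matrix (Fin n) (Fin n) ℝ) : ℕ :=
  if h : M.IsHermitian then (Finset.univ.filter fun i => h.eigenvalues i < 0).card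
  else 0

section Helper
variable {m : ℕ} {M : Matrix (Fin m) (Fin m) ℝ}

noncomputable def evec (hM : M.IsHermitian) (j : Fin m) : Fin m → ℝ :=
  (WithLp.equiv 2 _) (hM.eigenvectorBasis j)

lemma evec_mul (hM : M.IsHermitian) (j : Fin m) :
    M *ᵥ evec hM j = hM.eigenvalues j • evec hM j :=
  hM.mulVec_eigenvectorBasis j

lemma evec_dot (hM : M.IsHermitian) (i j : Fin m) :
    evec hM i ⬝ᵥ evec hM j = if i = j then 1 else 0 := by
  have h := orthonormal_iff_ite.mp hM.eigenvectorBasis.orthonormal i j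
  rw [PiLp.inner_apply] at h
  rw [dotProduct_comm]
  simpa [dotProduct, RCLike.inner_apply, evec] using h

lemma evec_expand (hM : M.IsHermitian) (x : Fin m → ℝ) :
    ∑ j, (evec hM j ⬝ᵥ x) • evec hM j = x := by
  have h := hM.eigenvectorBasis.sum_repr' (WithLp.toLp 2 x)
  have h2 : ∀ j, (inner ℝ (hM.eigenvectorBasis j) (WithLp.toLp 2 x) : ℝ)
      = evec hM j ⬝ᵥ x := by
    intro j
    rw [PiLp.inner_apply]
    simp [dotProduct, RCLike.inner_apply, evec, mul_comm]
  calc ∑ j, (evec hM j ⬝ᵥ x) • evec hM j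
      = ∑ j, (inner ℝ (hM.eigenvectorBasis j) (WithLp.toLp 2 x) : ℝ) • evec hM j := by
        simp_rw [h2]
    _ = x := by simpa [evec] using congrArg WithLp.ofLp h

lemma dot_sum {k : ℕ} (x : Fin m → ℝ) (f : Fin k → (Fin m → ℝ)) :
    x ⬝ᵥ (∑ j, f j) = ∑ j, x ⬝ᵥ f j := by
  simp only [dotProduct, Finset.sum_apply, Finset.mul_sum]
  exact Finset.sum_comm

lemma quad_eq (hM : M.IsHermitian) (x : Fin m → ℝ) :
    x ⬝ᵥ M *ᵥ x = ∑ j, hM.eigenvalues j * (evec hM j ⬝ᵥ x) ^ 2 := by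
  have h1 : M *ᵥ x = ∑ j, ((evec hM j ⬝ᵥ x) * hM.eigenvalues j) • evec hM j := by
    conv_lhs => rw [← evec_expand hM x, ← Matrix.mulVecLin_apply]
    rw [map_sum]
    refine Finset.sum_congr rfl fun j _ => ?_
    rw [_root_.map_smul, Matrix.mulVecLin_apply, evec_mul hM j, smul_smul]
  rw [h1, dot_sum]
  refine Finset.sum_congr rfl fun j _ => ?_
  rw [dotProduct_smul, smul_eq_mul, dotProduct_comm]
  ring

lemma eq_zero_of_dot_eq_zero (hM : M.IsHermitian) (x : Fin m → ℝ)
    (h : ∀ j, evec hM j ⬝ᵥ x = 0) : x = 0 := by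
  rw [← evec_expand hM x]
  simp [h]

lemma dot_eq_zero_of_mem_span (hM : M.IsHermitian) (p : Fin m → Prop) [DecidablePred p]
    (x : Fin m → ℝ)
    (hx : x ∈ Submodule.span ℝ (Set.range fun i : {i // p i} => evec hM i)) (j : Fin m)
    (hj : ¬ p j) : evec hM j ⬝ᵥ x = 0 := by
  induction hx using Submodule.span_induction with
  | mem y hy =>
    obtain ⟨i, rfl⟩ := hy
    rw [evec_dot]
    simp only [ite_eq_right_iff]
    intro h; exact absurd (h ▸ i.2) hj
  | zero => simp
  | add y z _ _ hy hz => rw [dotProduct_add, hy, hz, add_zero]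
  | smul c y _ hy => rw [dotProduct_smul, hy, smul_zero]

lemma finrank_span_evec (hM : M.IsHermitian) (p : Fin m → Prop) [DecidablePred p] :
    Module.finrank ℝ (Submodule.span ℝ (Set.range fun i : {i // p i} => evec hM i))
      = (Finset.univ.filter p).card := by
  have hli : LinearIndependent ℝ (evec hM) := by
    have h := hM.eigenvectorBasis.orthonormal.linearIndependent
    exact h.map' (WithLp.linearEquiv 2 ℝ (Fin m → ℝ)).toLinearMap
      (LinearEquiv.ker _)
  rw [show (fun i : {i // p i} => evec hM i) = evec hM ∘ Subtype.val from rfl,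
    finrank_span_eq_card (hli.comp Subtype.val Subtype.val_injective)]
  simp [Fintype.card_subtype]

lemma negInertia_eq (hM : M.IsHermitian) :
    negInertia M = (Finset.univ.filter fun i => hM.eigenvalues i < 0).card := by
  rw [negInertia, dif_pos hM]

lemma negInertia_le (hM : M.IsHermitian) : negInertia M ≤ m := by
  rw [negInertia_eq hM]
  exact (Finset.card_filter_le _ _).trans (by simp)

theorem exists_negSpace (hM : M.IsHermitian) :
    ∃ V : Submodule ℝ (Fin m → ℝ), Module.finrank ℝ V = negInertia M ∧
      ∀ x ∈ V, x ≠ 0 → x ⬝ᵥ M *ᵥ x < 0 := by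
  refine ⟨Submodule.span ℝ (Set.range fun i : {i // hM.eigenvalues i < 0} => evec hM i),
    by rw [finrank_span_evec, negInertia_eq hM], fun x hx hx0 => ?_⟩
  rw [quad_eq hM]
  have hz : ∀ j, ¬ hM.eigenvalues j < 0 → evec hM j ⬝ᵥ x = 0 :=
    fun j hj => dot_eq_zero_of_mem_span hM _ x hx j hj
  have hex : ∃ j, evec hM j ⬝ᵥ x ≠ 0 := by
    by_contra h
    push_neg at h
    exact hx0 (eq_zero_of_dot_eq_zero hM x h)
  obtain ⟨j0, hj0⟩ := hex
  have hj0neg : hM.eigenvalues j0 < 0 := by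
    by_contra h; exact hj0 (hz j0 h)
  have : ∑ j, hM.eigenvalues j * (evec hM j ⬝ᵥ x) ^ 2 < ∑ _j : Fin m, (0:ℝ) := by
    refine Finset.sum_lt_sum (fun j _ => ?_) ⟨j0, Finset.mem_univ j0, ?_⟩
    · by_cases hj : hM.eigenvalues j < 0
      · nlinarith [sq_nonneg (evec hM j ⬝ᵥ x)]
      · rw [hz j hj]; simp
    · have : (0:ℝ) < (evec hM j0 ⬝ᵥ x) ^ 2 := by positivity
      nlinarith
  simpa using this

theorem exists_nonnegSpace (hM : M.IsHermitian) :
    ∃ W : Submodule ℝ (Fin m → ℝ), Module.finrank ℝ W = m - negInertia M ∧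
      ∀ x ∈ W, 0 ≤ x ⬝ᵥ M *ᵥ x := by
  refine ⟨Submodule.span ℝ (Set.range fun i : {i // ¬ hM.eigenvalues i < 0} => evec hM i),
    ?_, fun x hx => ?_⟩
  · rw [finrank_span_evec, negInertia_eq hM]
    have := Finset.card_filter_add_card_filter_not
      (s := (Finset.univ : Finset (Fin m))) (fun i => hM.eigenvalues i < 0)
    simp only [Finset.card_univ, Fintype.card_fin] at this
    omega
  · rw [quad_eq hM]
    refine Finset.sum_nonneg fun j _ => ?_
    by_cases hj : hM.eigenvalues j < 0
    · rw [dot_eq_zero_of_mem_span hM _ x hx j (by simpa using hj)]; simp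
    · nlinarith [sq_nonneg (evec hM j ⬝ᵥ x), not_lt.mp hj]

lemma finrank_add_le_of_disjoint (V W : Submodule ℝ (Fin m → ℝ))
    (h : ∀ x, x ∈ V → x ∈ W → x = 0) :
    Module.finrank ℝ V + Module.finrank ℝ W ≤ m := by
  have hd : V ⊓ W = ⊥ := by
    rw [eq_bot_iff]; intro x hx
    exact (Submodule.mem_bot ℝ).mpr (h x hx.1 hx.2)
  have := Submodule.finrank_sup_add_finrank_inf_eq V W
  rw [hd, finrank_bot, add_zero] at this
  have hle := Submodule.finrank_le (V ⊔ W)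
  simp only [Module.finrank_fintype_fun_eq_card, Fintype.card_fin] at hle
  omega

theorem finrank_le_negInertia (hM : M.IsHermitian) (V : Submodule ℝ (Fin m → ℝ))
    (hV : ∀ x ∈ V, x ≠ 0 → x ⬝ᵥ M *ᵥ x < 0) :
    Module.finrank ℝ V ≤ negInertia M := by
  obtain ⟨W, hWrank, hW⟩ := exists_nonnegSpace hM
  have h := finrank_add_le_of_disjoint V W (fun x hxV hxW => by
    by_contra h0
    exact absurd (hW x hxW) (not_le.mpr (hV x hxV h0)))
  have := negInertia_le hM
  omega

theorem negInertia_add_finrank_le (hM : M.IsHermitian) (W : Submodule ℝ (Fin m → ℝ))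
    (hW : ∀ x ∈ W, 0 ≤ x ⬝ᵥ M *ᵥ x) :
    negInertia M + Module.finrank ℝ W ≤ m := by
  obtain ⟨V, hVrank, hV⟩ := exists_negSpace hM
  have h := finrank_add_le_of_disjoint V W (fun x hxV hxW => by
    by_contra h0
    exact absurd (hW x hxW) (not_le.mpr (hV x hxV h0)))
  omega

/-- The linear map `(x, t) ↦ Fin.snoc (x - t • w) t`. -/
noncomputable def snocMap {k : ℕ} (w : Fin k → ℝ) :
    ((Fin k → ℝ) × ℝ) →ₗ[ℝ] (Fin (k + 1) → ℝ) where
  toFun p := Fin.snoc (p.1 - p.2 • w) p.2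
  map_add' p q := by
    funext i
    induction i using Fin.lastCases with
    | last => simp
    | cast i =>
      simp only [Fin.snoc_castSucc, Pi.add_apply, Pi.sub_apply, Pi.smul_apply, smul_eq_mul,
        Prod.fst_add, Prod.snd_add]
      ring
  map_smul' c p := by
    funext i
    induction i using Fin.lastCases with
    | last => simp
    | cast i =>
      simp only [Fin.snoc_castSucc, Pi.smul_apply, Pi.sub_apply, smul_eq_mul,
        Prod.smul_fst, Prod.smul_snd, RingHom.id_apply]
      ring

lemma snocMap_injective {k : ℕ} (w : Fin k → ℝ) : Function.Injective (snocMap w) := by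
  intro p q h
  have hl : p.2 = q.2 := by
    have := congrFun h (Fin.last k)
    simpa [snocMap, Fin.snoc_last] using this
  have hf : p.1 = q.1 := by
    funext i
    have := congrFun h i.castSucc
    simp only [snocMap, LinearMap.coe_mk, AddHom.coe_mk, Fin.snoc_castSucc, Pi.sub_apply,
      Pi.smul_apply, smul_eq_mul] at this
    rw [hl] at this
    linarith
  exact Prod.ext hf hl

end Helper

theorem stmt0 {n : ℕ} (A : Matrix (Fin n) (Fin n) ℝ) (hA : A.IsSymm)
    (hrank : n - 1 ≤ A.rank)
    (α : Fin n → ℝ) (b : ℝ) (B : Matrix (Fin (n + 1)) (Fin (n + 1)) ℝ)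
    (hB1 : ∀ i j : Fin n, B i.castSucc j.castSucc = A i j)
    (hB2 : ∀ i : Fin n, B i.castSucc (Fin.last n) = α i)
    (hB3 : ∀ i : Fin n, B (Fin.last n) i.castSucc = α i)
    (hB4 : B (Fin.last n) (Fin.last n) = b)
    (hdet : ¬(A.det = 0 ∧ B.det = 0))
    (hpos : A.det * B.det > 0) :
    negInertia B = negInertia A := by
  -- Hermitian facts
  have hA' : A.IsHermitian := by
    rw [Matrix.IsHermitian, conjTranspose_eq_transpose_of_trivial]; exact hA
  have hB' : B.IsHermitian := by
    rw [Matrix.IsHermitian, conjTranspose_eq_transpose_of_trivial]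
    ext i j
    rw [transpose_apply]
    induction i using Fin.lastCases with
    | last => induction j using Fin.lastCases with
      | last => rfl
      | cast j => rw [hB2, hB3]
    | cast i => induction j using Fin.lastCases with
      | last => rw [hB2, hB3]
      | cast j => rw [hB1, hB1]; exact congrFun (congrFun hA i) j
  -- determinants are nonzero
  have hdetA : A.det ≠ 0 := by
    intro h; rw [h, zero_mul] at hpos; exact lt_irrefl 0 hpos
  have hAunit : IsUnit A.det := isUnit_iff_ne_zero.mpr hdetA
  haveI : Invertible A := A.invertibleOfIsUnitDet hAunit
  set w : Fin n → ℝ := A⁻¹ *ᵥ α with hw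
  have hAw : A *ᵥ w = α := by
    rw [hw, Matrix.mulVec_mulVec, Matrix.mul_nonsing_inv _ hAunit, Matrix.one_mulVec]
  set s : ℝ := b - α ⬝ᵥ w with hsdef
  -- block decomposition and determinant
  have hblock : B.submatrix finSumFinEquiv finSumFinEquiv =
      fromBlocks A (Matrix.of fun i (_ : Fin 1) => α i) (Matrix.of fun (_ : Fin 1) j => α j)
        (Matrix.of fun _ _ => b) := by
    ext i j
    have hlast : (finSumFinEquiv (Sum.inr 0 : Fin n ⊕ Fin 1)) = Fin.last n := by
      simp [finSumFinEquiv]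
      rfl
    cases i with
    | inl i => cases j with
      | inl j => simp; exact hB1 i j
      | inr j =>
        have : j = 0 := Subsingleton.elim _ _
        subst this
        simp only [submatrix_apply, hlast]
        simp; exact hB2 i
    | inr i =>
      have : i = 0 := Subsingleton.elim _ _
      subst this
      cases j with
      | inl j => simp only [submatrix_apply, hlast]; simp; exact hB3 j
      | inr j =>
        have : j = 0 := Subsingleton.elim _ _
        subst this
        simp only [submatrix_apply, hlast]
        simpa using hB4
  have hdetB : B.det = A.det * s := by
    have h1 : B.det = (B.submatrix finSumFinEquiv finSumFinEquiv).det :=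
      (Matrix.det_submatrix_equiv_self _ _).symm
    rw [h1, hblock, Matrix.det_fromBlocks₁₁]
    congr 1
    rw [Matrix.det_fin_one]
    simp only [Matrix.sub_apply, Matrix.mul_apply, of_apply, invOf_eq_nonsing_inv]
    rw [hsdef, hw]
    simp only [dotProduct, Matrix.mulVec, dotProduct, Finset.sum_mul, Finset.mul_sum]
    rw [Finset.sum_comm]
    congr 1
    refine Finset.sum_congr rfl fun i _ => Finset.sum_congr rfl fun j _ => ?_
    ring
  have hs : 0 < s := by
    rw [hdetB] at hpos
    nlinarith [sq_nonneg A.det]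
  -- the quadratic form of B on snoc vectors
  have quadB : ∀ (u : Fin n → ℝ) (t : ℝ),
      (Fin.snoc u t : Fin (n+1) → ℝ) ⬝ᵥ B *ᵥ (Fin.snoc u t) =
        u ⬝ᵥ A *ᵥ u + 2*t*(α ⬝ᵥ u) + b*t^2 := by
    intro u t
    simp only [dotProduct, mulVec, Fin.sum_univ_castSucc, Fin.snoc_castSucc, Fin.snoc_last,
      hB1, hB2, hB3, hB4, mul_add, add_mul, Finset.sum_add_distrib, Finset.mul_sum]
    ring_nf
    rw [add_assoc, ← Finset.sum_add_distrib]
    congr 1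
    exact Finset.sum_congr rfl fun x _ => by ring
  -- key algebraic identity
  have hkey : ∀ (x : Fin n → ℝ) (t : ℝ),
      ((snocMap w (x, t)) ⬝ᵥ B *ᵥ (snocMap w (x, t))) = x ⬝ᵥ A *ᵥ x + s * t^2 := by
    intro x t
    have h0 : (snocMap w (x, t) : Fin (n+1) → ℝ) = Fin.snoc (x - t • w) t := rfl
    rw [h0, quadB]
    have hsym : w ⬝ᵥ A *ᵥ x = α ⬝ᵥ x := by
      rw [Matrix.dotProduct_mulVec, ← Matrix.mulVec_transpose, hA, hAw]
    have hxw : x ⬝ᵥ A *ᵥ w = α ⬝ᵥ x := by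
      rw [hAw, dotProduct_comm]
    rw [Matrix.mulVec_sub, Matrix.mulVec_smul, hAw]
    rw [dotProduct_sub, sub_dotProduct, dotProduct_sub, sub_dotProduct]
    simp only [dotProduct_smul, smul_dotProduct, smul_eq_mul, hsym, hxw]
    rw [hsdef, dotProduct_comm x α, dotProduct_comm w α]
    ring
  set Tin : (Fin n → ℝ) →ₗ[ℝ] (Fin (n+1) → ℝ) :=
    (snocMap w).comp (LinearMap.inl ℝ (Fin n → ℝ) ℝ) with hTin
  have hTin_inj : Function.Injective Tin :=
    (snocMap_injective w).comp LinearMap.inl_injective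
  have hTin_apply : ∀ x, Tin x = snocMap w (x, 0) := fun x => rfl
  -- direction 1 : negInertia A ≤ negInertia B
  obtain ⟨V₁, hV₁rank, hV₁⟩ := exists_negSpace hA'
  have dir1 : negInertia A ≤ negInertia B := by
    have hmap : Module.finrank ℝ (Submodule.map Tin V₁) = negInertia A := by
      rw [← hV₁rank]
      exact (Submodule.equivMapOfInjective Tin hTin_inj V₁).symm.finrank_eq
    rw [← hmap]
    refine finrank_le_negInertia hB' _ (fun y hy hy0 => ?_)
    obtain ⟨x, hxV, rfl⟩ := hy
    have hx0 : x ≠ 0 := by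
      intro h; apply hy0; rw [h, map_zero]
    rw [hTin_apply, hkey]
    have := hV₁ x hxV hx0
    nlinarith
  -- direction 2 : negInertia B ≤ negInertia A
  obtain ⟨W₁, hW₁rank, hW₁⟩ := exists_nonnegSpace hA'
  have vlast : (snocMap w ((0 : Fin n → ℝ), (1:ℝ))) (Fin.last n) = 1 := by
    simp [snocMap, Fin.snoc_last]
  have vne : snocMap w ((0 : Fin n → ℝ), (1:ℝ)) ≠ 0 := by
    intro h
    rw [h] at vlast
    simpa using vlast
  set WB : Submodule ℝ (Fin (n+1) → ℝ) :=
    (Submodule.map Tin W₁) ⊔ (Submodule.span ℝ {snocMap w ((0 : Fin n → ℝ), (1:ℝ))}) with hWB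
  have hlast0 : ∀ y ∈ Submodule.map Tin W₁, y (Fin.last n) = 0 := by
    intro y hy
    obtain ⟨x, _, rfl⟩ := hy
    simp [hTin_apply, snocMap, Fin.snoc_last]
  have hWBrank : Module.finrank ℝ WB = (n - negInertia A) + 1 := by
    have hinf : (Submodule.map Tin W₁) ⊓
        (Submodule.span ℝ {snocMap w ((0 : Fin n → ℝ), (1:ℝ))}) = ⊥ := by
      refine (Submodule.eq_bot_iff _).mpr fun y hy => ?_
      obtain ⟨hy1, hy2⟩ := Submodule.mem_inf.mp hy
      rw [Submodule.mem_span_singleton] at hy2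
      obtain ⟨c, rfl⟩ := hy2
      have := hlast0 _ hy1
      rw [Pi.smul_apply, vlast, smul_eq_mul, mul_one] at this
      rw [this, zero_smul]
    have := Submodule.finrank_sup_add_finrank_inf_eq (Submodule.map Tin W₁)
      (Submodule.span ℝ {snocMap w ((0 : Fin n → ℝ), (1:ℝ))})
    rw [hinf, finrank_bot, add_zero] at this
    rw [hWB, this, finrank_span_singleton vne,
      (Submodule.equivMapOfInjective Tin hTin_inj W₁).symm.finrank_eq, hW₁rank]
  have hWBnonneg : ∀ y ∈ WB, 0 ≤ y ⬝ᵥ B *ᵥ y := by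
    intro y hy
    rw [hWB, Submodule.mem_sup] at hy
    obtain ⟨y1, hy1, y2, hy2, rfl⟩ := hy
    obtain ⟨x, hxW, rfl⟩ := hy1
    rw [Submodule.mem_span_singleton] at hy2
    obtain ⟨c, rfl⟩ := hy2
    have heq : Tin x + c • snocMap w ((0 : Fin n → ℝ), (1:ℝ)) = snocMap w (x, c) := by
      rw [hTin_apply, ← _root_.map_smul, ← map_add]
      congr 1
      simp
    rw [heq, hkey]
    have := hW₁ x hxW
    nlinarith
  have dir2 : negInertia B ≤ negInertia A := by
    have h := negInertia_add_finrank_le hB' WB hWBnonneg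
    rw [hWBrank] at h
    have h2 := negInertia_le hA'
    omega
  omega
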